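/- arXiv:2005.11528 — 4 statements merged into one kernel-verified Lean document; each statement's English description precedes it below -/
import Mathlib

section
/- For every p ∈ (0,1], the distributions of Y under the joint intervention do(X1 = false, X2 = true) differ between M̈ and M̃: the pushforward of Bernoulli(p) under u ↦ false ∧ true ∧ u is the point mass at false, while the pushforward under u ↦ true ∧ u is the Bernoulli(p) PMF, and these two PMFs on Bool are not equal. -/
open PMF

/-- For `p ∈ (0, 1]`, the distributions of `Y` under the joint intervention
`do(X1 = false, X2 = true)` differ between `M̈` (where `Y = X1 ∧ X2 ∧ U = false ∧ true ∧ u`)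
and `M̃` (where `Y = X2 ∧ U = true ∧ u`): the former pushforward is the point mass at `false`,
the latter is the Bernoulli(`p`) PMF, and the two PMFs are not equal. -/
theorem joint_interventional_distributions_differ (p : ENNReal) (hp0 : 0 < p) (hp : p ≤ 1) :
    (PMF.bernoulli p.toNNReal (by simpa using ENNReal.toNNReal_mono ENNReal.one_ne_top hp)).map (fun u => false && (true && u)) = PMF.pure false ∧
    (PMF.bernoulli p.toNNReal (by simpa using ENNReal.toNNReal_mono ENNReal.one_ne_top hp)).map (fun u => true && u) = PMF.bernoulli p.toNNReal (by simpa using ENNReal.toNNReal_mono ENNReal.one_ne_top hp) ∧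
    (PMF.bernoulli p.toNNReal (by simpa using ENNReal.toNNReal_mono ENNReal.one_ne_top hp)).map (fun u => false && (true && u))
      ≠ (PMF.bernoulli p.toNNReal (by simpa using ENNReal.toNNReal_mono ENNReal.one_ne_top hp)).map (fun u => true && u) := by
  have h1 : (PMF.bernoulli p.toNNReal (by simpa using ENNReal.toNNReal_mono ENNReal.one_ne_top hp)).map (fun u => false && (true && u)) = PMF.pure false := by
    simp only [Bool.false_and]
    exact PMF.map_const _ _
  have h2 : (PMF.bernoulli p.toNNReal (by simpa using ENNReal.toNNReal_mono ENNReal.one_ne_top hp)).map (fun u => true && u) = (PMF.bernoulli p.toNNReal (by simpa using ENNReal.toNNReal_mono ENNReal.one_ne_top hp)) := by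
    simp only [Bool.true_and]
    exact PMF.map_id _
  refine ⟨h1, h2, ?_⟩
  rw [h1, h2]
  intro h
  have := congrFun (congrArg DFunLike.coe h) true
  simp [PMF.bernoulli] at this
  exact hp0.ne' (((ENNReal.toNNReal_eq_zero_iff _).1 this.symm).resolve_right (ne_top_of_le_ne_top ENNReal.one_ne_top hp))
end

section
/- (Non-identifiability of joint interventional effects in unconstrained SCMs.) For every p ∈ (0,1), the models M̈ and M̃ induce identical observational distributions of (X1, X2, Y), identical do(X1 = b) interventional distributions of (X2, Y) for every b : Bool, and identical do(X2 = b) interventional distributions of (X1, Y) for every b : Bool, yet their distributions of Y under the joint intervention do(X1 = false, X2 = true) are distinct. Hence there exist two structural causal models that agree on the observational distribution and on all single-variable interventional distributions but disagree on a joint interventional distribution. -/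
open PMF

/-- Non-identifiability of joint interventional effects in unconstrained SCMs: for every
`p ∈ (0, 1)`, the SCMs `M̈` (`X1 = U`, `X2 = X1 ∧ U`, `Y = X1 ∧ X2 ∧ U`) and `M̃`
(`X1 = U`, `X2 = X1 ∧ U`, `Y = X2 ∧ U`), with `U ~ Bernoulli(p)`, induce identical
observational distributions of `(X1, X2, Y)`, identical `do(X1 = b)` interventional
distributions of `(X2, Y)` for every `b`, and identical `do(X2 = b)` interventional
distributions of `(X1, Y)` for every `b`, yet their distributions of `Y` under the joint
intervention `do(X1 = false, X2 = true)` are distinct. -/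
theorem nonidentifiability_unconstrained_SCM (p : ENNReal) (hp0 : 0 < p) (hp1 : p < 1) :
    (PMF.bernoulli p.toNNReal (by simpa using ENNReal.toNNReal_mono ENNReal.one_ne_top hp1.le)).map (fun u => (u, u && u, u && ((u && u) && u)))
      = (PMF.bernoulli p.toNNReal (by simpa using ENNReal.toNNReal_mono ENNReal.one_ne_top hp1.le)).map (fun u => (u, u && u, (u && u) && u)) ∧
    (∀ b : Bool,
      (PMF.bernoulli p.toNNReal (by simpa using ENNReal.toNNReal_mono ENNReal.one_ne_top hp1.le)).map (fun u => (b && u, b && ((b && u) && u)))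
        = (PMF.bernoulli p.toNNReal (by simpa using ENNReal.toNNReal_mono ENNReal.one_ne_top hp1.le)).map (fun u => (b && u, (b && u) && u))) ∧
    (∀ b : Bool,
      (PMF.bernoulli p.toNNReal (by simpa using ENNReal.toNNReal_mono ENNReal.one_ne_top hp1.le)).map (fun u => (u, u && (b && u)))
        = (PMF.bernoulli p.toNNReal (by simpa using ENNReal.toNNReal_mono ENNReal.one_ne_top hp1.le)).map (fun u => (u, b && u))) ∧
    (PMF.bernoulli p.toNNReal (by simpa using ENNReal.toNNReal_mono ENNReal.one_ne_top hp1.le)).map (fun u => false && (true && u))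
      ≠ (PMF.bernoulli p.toNNReal (by simpa using ENNReal.toNNReal_mono ENNReal.one_ne_top hp1.le)).map (fun u => true && u) := by
  refine ⟨?_, ?_, ?_, ?_⟩
  · congr 1; funext u; cases u <;> rfl
  · intro b; congr 1; funext u; cases b <;> cases u <;> rfl
  · intro b; congr 1; funext u; cases b <;> cases u <;> rfl
  · intro h
    have h2 := congrFun (congrArg DFunLike.coe h) true
    simp only [PMF.map_apply, PMF.bernoulli_apply] at h2
    rw [tsum_bool, tsum_bool] at h2
    simp at h2
    have h3 := h2.trans (PMF.bernoulli_apply _ true)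
    simp [hp0.ne', (hp1.trans ENNReal.one_lt_top).ne] at h3
    exact absurd h3.symm hp0.ne'
end

section
/- Let n ∈ ℕ and let f : ℝⁿ → ℝⁿ be continuously differentiable such that each component f_i depends only on the coordinates with index less than i. Then g(x) := x − f(x) is a bijection of ℝⁿ that preserves Lebesgue measure: the pushforward of n-dimensional Lebesgue measure under g equals Lebesgue measure. -/
open MeasureTheory

private theorem fderiv_triangular_zero (n : ℕ) (f : (Fin n → ℝ) → (Fin n → ℝ))
    (hf : ContDiff ℝ 1 f)
    (htri : ∀ (i : Fin n) (x y : Fin n → ℝ),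
      (∀ j : Fin n, j < i → x j = y j) → f x i = f y i)
    (x : Fin n → ℝ) (i j : Fin n) (hij : i ≤ j) :
    fderiv ℝ f x (Pi.single j 1) i = 0 := by
  set v : Fin n → ℝ := Pi.single j 1 with hv
  have hdiff := (hf.differentiable one_ne_zero x).hasFDerivAt
  have h1 : HasDerivAt (fun t : ℝ => x + t • v) v 0 := by
    simpa using ((hasDerivAt_id (0:ℝ)).smul_const v).const_add x
  have h2 : HasDerivAt (fun t : ℝ => f (x + t • v)) (fderiv ℝ f x v) 0 := by
    have hdiff' : HasFDerivAt f (fderiv ℝ f x) (x + (0:ℝ) • v) := by simpa using hdiff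
    have := hdiff'.comp_hasDerivAt (0:ℝ) h1
    exact this
  have h3 : HasDerivAt (fun t : ℝ => f (x + t • v) i) (fderiv ℝ f x v i) 0 :=
    (ContinuousLinearMap.proj (R := ℝ) (φ := fun _ : Fin n => ℝ) i).hasFDerivAt.comp_hasDerivAt 0 h2
  have hconst : (fun t : ℝ => f (x + t • v) i) = fun _ => f x i := by
    funext t
    refine htri i _ _ fun k hk => ?_
    have hkj : k ≠ j := fun h => absurd (h ▸ hk) (not_lt.2 hij)
    simp [hv, Pi.single_apply, hkj]
  rw [hconst] at h3
  exact h3.unique (hasDerivAt_const _ _)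

/-- If `f : ℝⁿ → ℝⁿ` is continuously differentiable and each component `f i` depends only
on the coordinates with index less than `i` (acyclicity), then `g x = x - f x` is a
bijection of `ℝⁿ` that preserves Lebesgue measure: the pushforward of `n`-dimensional
Lebesgue measure under `g` equals Lebesgue measure. -/
theorem sub_triangular_bijective_measurePreserving
    (n : ℕ) (f : (Fin n → ℝ) → (Fin n → ℝ))
    (hf : ContDiff ℝ 1 f)
    (htri : ∀ (i : Fin n) (x y : Fin n → ℝ),
      (∀ j : Fin n, j < i → x j = y j) → f x i = f y i) :
    Function.Bijective (fun x : Fin n → ℝ => x - f x) ∧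
    Measure.map (fun x : Fin n → ℝ => x - f x) volume = volume := by
  set g : (Fin n → ℝ) → (Fin n → ℝ) := fun x => x - f x with hg
  -- injectivity
  have hinj : Function.Injective g := by
    intro x y hxy
    have key : ∀ m : ℕ, ∀ i : Fin n, (i : ℕ) = m → x i = y i := by
      intro m
      induction m using Nat.strong_induction_on with
      | _ m ih =>
        intro i hi
        have hfi : f x i = f y i := htri i x y fun j hj => ih j (hi ▸ hj) j rfl
        have := congrFun hxy i
        simp only [hg, Pi.sub_apply] at this
        linarith
    funext i; exact key i i rfl
  -- surjectivity
  have hsurj : Function.Surjective g := by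
    intro z
    set h : (Fin n → ℝ) → (Fin n → ℝ) := fun x => z + f x with hh
    have step : ∀ (x y : Fin n → ℝ) (k : ℕ), (∀ j : Fin n, (j : ℕ) < k → x j = y j) →
        ∀ j : Fin n, (j : ℕ) < k + 1 → h x j = h y j := by
      intro x y k hxy j hj
      have : f x j = f y j :=
        htri j x y fun m hm => hxy m (lt_of_lt_of_le hm (Nat.lt_succ_iff.1 hj))
      simp [hh, this]
    have iter : ∀ k : ℕ, ∀ j : Fin n, (j : ℕ) < k → h^[k+1] z j = h^[k] z j := by
      intro k
      induction k with
      | zero => intro j hj; exact absurd hj (Nat.not_lt_zero _)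
      | succ k ih =>
        intro j hj
        have := step (h^[k+1] z) (h^[k] z) k (fun m hm => ih m hm) j hj
        simpa [Function.iterate_succ_apply'] using this
    refine ⟨h^[n] z, ?_⟩
    have hfix : h (h^[n] z) = h^[n] z := by
      funext j
      have := iter n j j.isLt
      rwa [Function.iterate_succ_apply'] at this
    have : h^[n] z = z + f (h^[n] z) := hfix.symm
    show h^[n] z - f (h^[n] z) = z
    nth_rewrite 1 [this]
    simp
  -- derivative
  set g' : (Fin n → ℝ) → ((Fin n → ℝ) →L[ℝ] (Fin n → ℝ)) :=
    fun x => ContinuousLinearMap.id ℝ _ - fderiv ℝ f x with hg'def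
  have hg' : ∀ x, HasFDerivAt g (g' x) x := fun x =>
    (hasFDerivAt_id x).sub (hf.differentiable one_ne_zero x).hasFDerivAt
  have hdet : ∀ x, (g' x).det = 1 := by
    intro x
    have hM : ∀ i j : Fin n, LinearMap.toMatrix' ((g' x) : (Fin n → ℝ) →ₗ[ℝ] (Fin n → ℝ)) i j
        = (if i = j then 1 else 0) - fderiv ℝ f x (Pi.single j 1) i := by
      intro i j
      rw [LinearMap.toMatrix'_apply]
      have : (fun j' => if j' = j then (1:ℝ) else 0) = Pi.single j 1 := by
        funext k; simp [Pi.single_apply]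
      simp [hg'def, Pi.single_apply]
    have htr : (LinearMap.toMatrix' ((g' x) : (Fin n → ℝ) →ₗ[ℝ] (Fin n → ℝ))).BlockTriangular
        OrderDual.toDual := by
      intro i j hij
      have hij' : i < j := hij
      rw [hM]
      rw [fderiv_triangular_zero n f hf htri x i j hij'.le]
      simp [hij'.ne]
    have := Matrix.det_of_lowerTriangular _ htr
    have hdiag : ∀ i : Fin n, LinearMap.toMatrix' ((g' x) : (Fin n → ℝ) →ₗ[ℝ] (Fin n → ℝ)) i i = 1 := by
      intro i
      rw [hM, fderiv_triangular_zero n f hf htri x i i le_rfl]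
      simp
    have : LinearMap.det ((g' x) : (Fin n → ℝ) →ₗ[ℝ] (Fin n → ℝ)) = 1 := by
      rw [← LinearMap.det_toMatrix' , this]
      simp [hdiag]
    exact this
  refine ⟨⟨hinj, hsurj⟩, ?_⟩
  have hgc : Continuous g := (contDiff_id.sub hf).continuous
  have hmeas : Measurable g := hgc.measurable
  refine Measure.ext fun s hs => ?_
  rw [Measure.map_apply hmeas hs]
  have hsm : MeasurableSet (g ⁻¹' s) := hmeas hs
  have hcv := lintegral_abs_det_fderiv_eq_addHaar_image volume hsm
    (fun x _ => (hg' x).hasFDerivWithinAt) (fun x _ y _ hxy => hinj hxy)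
  rw [Set.image_preimage_eq s hsurj] at hcv
  simpa [hdet] using hcv
end

section
/- Let n ∈ ℕ and let f : ℝⁿ → ℝⁿ be continuously differentiable such that each component f_i depends only on the coordinates with index less than i, let g(x) := x − f(x), and let S := g⁻¹ (which exists since g is a bijection). If μ is a measure on ℝⁿ with density p with respect to Lebesgue measure (μ = volume.withDensity p for a measurable p : ℝⁿ → [0,∞)), then the pushforward of μ under S has density x ↦ p(x − f(x)) with respect to Lebesgue measure. Equivalently, if the noise vector U has density p_U, then the solution X = S(U) of the acyclic additive noise SCM X = f(X) + U has density p_X(x) = p_U(x − f(x)). -/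
open MeasureTheory

noncomputable def scmInvAux (n : ℕ) (f : (Fin n → ℝ) → (Fin n → ℝ)) (y : Fin n → ℝ) : ℕ → ℝ
  | k =>
    if h : k < n then
      y ⟨k, h⟩ + f (fun j : Fin n => if hj : (j : ℕ) < k then scmInvAux n f y j else 0) ⟨k, h⟩
    else 0
termination_by k => k
decreasing_by exact hj

theorem scm_surj (n : ℕ) (f : (Fin n → ℝ) → (Fin n → ℝ))
    (htri : ∀ (i : Fin n) (x y : Fin n → ℝ),
      (∀ j : Fin n, j < i → x j = y j) → f x i = f y i) (y : Fin n → ℝ) :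
    (fun i : Fin n => scmInvAux n f y i) - f (fun i : Fin n => scmInvAux n f y i) = y := by
  set x : Fin n → ℝ := fun i : Fin n => scmInvAux n f y i with hx
  funext i
  have hunfold : scmInvAux n f y i =
      y i + f (fun j : Fin n => if hj : (j : ℕ) < (i : ℕ) then scmInvAux n f y j else 0) i := by
    rw [scmInvAux]
    simp [i.isLt]
  have hfx : f (fun j : Fin n => if hj : (j : ℕ) < (i : ℕ) then scmInvAux n f y j else 0) i
      = f x i := by
    apply htri
    intro j hj
    simp [hx, Fin.lt_def.mp hj]
  have : x i = y i + f x i := hunfold.trans (by rw [hfx])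
  simp [Pi.sub_apply, this]

theorem scm_inj (n : ℕ) (f : (Fin n → ℝ) → (Fin n → ℝ))
    (htri : ∀ (i : Fin n) (x y : Fin n → ℝ),
      (∀ j : Fin n, j < i → x j = y j) → f x i = f y i) :
    Function.Injective (fun x : Fin n → ℝ => x - f x) := by
  intro x x' hgx
  simp only at hgx
  have key : ∀ k : ℕ, ∀ h : k < n, x ⟨k, h⟩ = x' ⟨k, h⟩ := by
    intro k
    induction k using Nat.strong_induction_on with
    | _ k ih =>
      intro h
      have h1 : x ⟨k, h⟩ - f x ⟨k, h⟩ = x' ⟨k, h⟩ - f x' ⟨k, h⟩ := by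
        have := congrFun hgx ⟨k, h⟩; simpa using this
      have h2 : f x ⟨k, h⟩ = f x' ⟨k, h⟩ := by
        apply htri
        intro j hj
        have := ih j (by simpa [Fin.lt_def] using hj) j.isLt
        simpa using this
      linarith
  funext i
  have := key i i.isLt
  simpa using this

theorem scm_deriv_zero (n : ℕ) (f : (Fin n → ℝ) → (Fin n → ℝ))
    (htri : ∀ (i : Fin n) (x y : Fin n → ℝ),
      (∀ j : Fin n, j < i → x j = y j) → f x i = f y i)
    (x : Fin n → ℝ) (L : (Fin n → ℝ) →L[ℝ] (Fin n → ℝ)) (hL : HasFDerivAt f L x)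
    (i j : Fin n) (hij : i ≤ j) : L (Pi.single j 1) i = 0 := by
  set v : Fin n → ℝ := Pi.single j 1 with hv
  set c : ℝ → (Fin n → ℝ) := fun t => x + t • v with hc
  have hc0 : c 0 = x := by simp [hc]
  have hcd : HasDerivAt c v 0 := by
    have : HasDerivAt (fun t : ℝ => t • v) ((1 : ℝ) • v) 0 :=
      (hasDerivAt_id (0 : ℝ)).smul_const v
    simpa [hc] using this.const_add x
  have hF : HasFDerivAt (fun y => f y i) ((ContinuousLinearMap.proj i).comp L) x := by
    exact ((ContinuousLinearMap.proj i).hasFDerivAt (x := f x)).comp x hL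
  have hF' : HasFDerivAt (fun y => f y i) ((ContinuousLinearMap.proj i).comp L) (c 0) := by
    rw [hc0]; exact hF
  have hchain : HasDerivAt (fun t => f (c t) i) (((ContinuousLinearMap.proj i).comp L) v) 0 :=
    hF'.comp_hasDerivAt 0 hcd
  have hconst : (fun t => f (c t) i) = fun _ => f x i := by
    funext t
    apply htri
    intro k hk
    have hkj : k ≠ j := fun hkj => absurd (hkj ▸ hk) (not_lt.mpr hij)
    simp [hc, hv, Pi.single_eq_of_ne hkj]
  have : ((ContinuousLinearMap.proj i).comp L) v = 0 := by
    have h0 : HasDerivAt (fun t => f (c t) i) 0 0 := by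
      rw [hconst]; exact hasDerivAt_const _ _
    exact hchain.unique h0
  simpa using this

theorem scm_det_one (n : ℕ) (L : (Fin n → ℝ) →L[ℝ] (Fin n → ℝ))
    (hz : ∀ i j : Fin n, i ≤ j → L (Pi.single j 1) i = 0) :
    (ContinuousLinearMap.id ℝ (Fin n → ℝ) - L).det = 1 := by
  set D := ContinuousLinearMap.id ℝ (Fin n → ℝ) - L with hD
  have : (D : (Fin n → ℝ) →ₗ[ℝ] (Fin n → ℝ)).det = 1 := by
    rw [← LinearMap.det_toMatrix (Pi.basisFun ℝ (Fin n))]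
    set M := LinearMap.toMatrix (Pi.basisFun ℝ (Fin n)) (Pi.basisFun ℝ (Fin n))
      (D : (Fin n → ℝ) →ₗ[ℝ] (Fin n → ℝ)) with hM
    have hMij : ∀ i j : Fin n,
        M i j = (Pi.single j 1 : Fin n → ℝ) i - L (Pi.single j 1) i := by
      intro i j
      rw [hM, LinearMap.toMatrix_apply]
      simp [hD, Pi.basisFun_apply, Pi.basisFun_repr]
    have htr : M.BlockTriangular OrderDual.toDual := by
      intro i j hij
      have hij' : (i : Fin n) < j := hij
      rw [hMij, hz i j hij'.le, Pi.single_eq_of_ne (ne_of_lt hij')]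
      ring
    rw [Matrix.det_of_lowerTriangular M htr]
    apply Finset.prod_eq_one
    intro i _
    rw [hMij, hz i i le_rfl, Pi.single_eq_same]
    ring
  rw [ContinuousLinearMap.det]
  exact this

/-- Change of variables for acyclic additive noise SCMs: if `f : ℝⁿ → ℝⁿ` is continuously
differentiable, each component `f i` depends only on the coordinates with index less than
`i`, `g x := x - f x`, and `S` is the inverse of the bijection `g`, then for any measure
`μ = volume.withDensity p`, the pushforward of `μ` under `S` has density `x ↦ p (x - f x)`
with respect to Lebesgue measure: if the noise `U` has density `p`, then the SCM solution
`X = S U` has density `p_X x = p (x - f x)`. -/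
theorem density_of_scm_solution
    (n : ℕ) (f : (Fin n → ℝ) → (Fin n → ℝ))
    (hf : ContDiff ℝ 1 f)
    (htri : ∀ (i : Fin n) (x y : Fin n → ℝ),
      (∀ j : Fin n, j < i → x j = y j) → f x i = f y i)
    (p : (Fin n → ℝ) → ENNReal) (hp : Measurable p) :
    (volume.withDensity p).map (Function.invFun (fun x : Fin n → ℝ => x - f x))
      = volume.withDensity (fun x => p (x - f x)) := by
  set g : (Fin n → ℝ) → (Fin n → ℝ) := fun x => x - f x with hg
  set D : (Fin n → ℝ) → ((Fin n → ℝ) →L[ℝ] (Fin n → ℝ)) :=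
    fun x => ContinuousLinearMap.id ℝ (Fin n → ℝ) - fderiv ℝ f x with hDdef
  have hfd : ∀ x, HasFDerivAt f (fderiv ℝ f x) x := fun x =>
    (hf.differentiable one_ne_zero x).hasFDerivAt
  have hdet : ∀ x, (D x).det = 1 := fun x =>
    scm_det_one n (fderiv ℝ f x) (fun i j hij => scm_deriv_zero n f htri x _ (hfd x) i j hij)
  have hgd : ∀ x, HasFDerivAt g (D x) x := fun x => (hasFDerivAt_id x).sub (hfd x)
  have hstrict : ∀ x, HasStrictFDerivAt g (D x) x := fun x =>
    (hasStrictFDerivAt_id x).sub ((hf.contDiffAt).hasStrictFDerivAt one_ne_zero)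
  have hdetne : ∀ x, LinearMap.det ((D x) : (Fin n → ℝ) →ₗ[ℝ] (Fin n → ℝ)) ≠ 0 := by
    intro x
    have := hdet x
    rw [ContinuousLinearMap.det] at this
    rw [this]; exact one_ne_zero
  set E : (Fin n → ℝ) → ((Fin n → ℝ) ≃L[ℝ] (Fin n → ℝ)) := fun x =>
    (LinearMap.equivOfDetNeZero _ (hdetne x)).toContinuousLinearEquiv with hE
  have hEcoe : ∀ x, ((E x) : (Fin n → ℝ) →L[ℝ] (Fin n → ℝ)) = D x := by
    intro x
    apply ContinuousLinearMap.ext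
    intro v
    rfl
  have hopen : IsOpenMap g := by
    apply isOpenMap_of_hasStrictFDerivAt_equiv (f' := E)
    intro x
    rw [hEcoe x]
    exact hstrict x
  have hcont : Continuous g := continuous_id.sub hf.continuous
  have hinj : Function.Injective g := scm_inj n f htri
  have hsurj : Function.Surjective g := fun y =>
    ⟨fun i : Fin n => scmInvAux n f y i, scm_surj n f htri y⟩
  have hbij : Function.Bijective g := ⟨hinj, hsurj⟩
  set homeo : (Fin n → ℝ) ≃ₜ (Fin n → ℝ) :=
    Equiv.toHomeomorphOfContinuousOpen (Equiv.ofBijective g hbij) hcont hopen with hhomeo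
  have hhapp : ∀ x, homeo x = g x := fun x => rfl
  have hSsymm : Function.invFun g = ⇑homeo.symm := by
    funext u
    have h1 : g (homeo.symm u) = u := by
      rw [← hhapp]; exact homeo.apply_symm_apply u
    calc Function.invFun g u = Function.invFun g (g (homeo.symm u)) := by rw [h1]
      _ = homeo.symm u := Function.leftInverse_invFun hinj _
  have hSmeas : Measurable (Function.invFun g) := by
    rw [hSsymm]; exact homeo.symm.continuous.measurable
  ext A hA
  rw [Measure.map_apply hSmeas hA, withDensity_apply _ (hSmeas hA), withDensity_apply _ hA]
  have himg : Function.invFun g ⁻¹' A = g '' A := by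
    rw [hSsymm]
    ext u
    constructor
    · intro hu
      exact ⟨homeo.symm u, hu, by rw [← hhapp]; exact homeo.apply_symm_apply u⟩
    · rintro ⟨a, ha, rfl⟩
      have : homeo.symm (g a) = a := by rw [← hhapp]; exact homeo.symm_apply_apply a
      simpa [Set.mem_preimage, this] using ha
  rw [himg]
  rw [lintegral_image_eq_lintegral_abs_det_fderiv_mul volume hA
    (fun x _ => (hgd x).hasFDerivWithinAt) (hinj.injOn) p]
  apply lintegral_congr
  intro x
  simp [hdet x]
  rfl
end
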